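/- arXiv:1304.7178 — 2 statements merged into one kernel-verified Lean document; each statement's English description precedes it below -/
import Mathlib

section
/- Let T = [a, b] ⊂ ℝ with a < b, and let h ∈ ℝ with 0 < |h| ≤ (b − a)/2. Define the temporal edge-correction weight w : ℝ → ℝ by w(t) = 1 if both a ≤ t − |h| and t + |h| ≤ b (i.e. both ends of the interval of length 2|h| centred at t lie within [a, b]), and w(t) = 1/2 otherwise. Then ∫_a^b 1_{[a,b]}(t + h) / w(t) dt = b − a. (This is the temporal part of the step (*) = 1 in the proof that the estimator of the spatio-temporal inhomogeneous K-function with the isotropic edge-correction factor is unbiased.) -/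
open MeasureTheory

lemma aux_ae_const_integral (f : ℝ → ℝ) (c x y : ℝ) (hxy : x ≤ y)
    (hfc : ∀ᵐ t : ℝ, t ∈ Set.Ioc x y → f t = c) :
    IntervalIntegrable f volume x y ∧ ∫ t in x..y, f t = (y - x) * c := by
  have hae : f =ᵐ[volume.restrict (Set.Ioc x y)] (fun _ => c) :=
    (ae_restrict_iff' measurableSet_Ioc).mpr hfc
  constructor
  · rw [intervalIntegrable_iff, Set.uIoc_of_le hxy]
    exact ((integrableOn_const_iff (C := c)).mpr (Or.inr measure_Ioc_lt_top)).congr hae.symm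
  · have := intervalIntegral.integral_congr_ae (μ := volume) (a := x) (b := y)
      (f := f) (g := fun _ => c) (by rwa [Set.uIoc_of_le hxy])
    rw [this, intervalIntegral.integral_const, smul_eq_mul]

/-- The temporal part of the step `(*) = 1` in the proof of unbiasedness of the
STIK-function estimator with the isotropic edge-correction factor:
`∫_a^b 1_{[a,b]}(t + h) / w(t) dt = b − a`, where `w(t) = 1` if both ends of the
interval of length `2|h|` centred at `t` lie within `[a, b]`, and `1/2` otherwise. -/
theorem temporal_isotropic_edge_correction
    (a b : ℝ) (hab : a < b)
    (h : ℝ) (hh0 : 0 < |h|) (hhb : |h| ≤ (b - a) / 2)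
    (w : ℝ → ℝ)
    (hw : ∀ t, w t = if a ≤ t - |h| ∧ t + |h| ≤ b then (1 : ℝ) else 1 / 2) :
    ∫ t in a..b, (Set.Icc a b).indicator (fun _ => (1 : ℝ)) (t + h) / w t
      = b - a := by
  set k := |h| with hk
  set f : ℝ → ℝ := fun t => (Set.Icc a b).indicator (fun _ => (1 : ℝ)) (t + h) / w t with hf
  have h2k : a + k ≤ b - k := by linarith
  have h1 : a ≤ a + k := by linarith
  have h3 : b - k ≤ b := by linarith
  -- ae avoid singletons
  have hne : ∀ z : ℝ, ∀ᵐ t : ℝ, t ≠ z := by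
    intro z
    rw [ae_iff]
    simpa using measure_singleton z
  -- middle piece: f = 1
  have mid : ∀ᵐ t : ℝ, t ∈ Set.Ioc (a + k) (b - k) → f t = 1 := by
    filter_upwards with t ht
    have habs : |h| ≤ k := le_of_eq rfl
    have hh1 : -k ≤ h := neg_le_of_abs_le habs
    have hh2 : h ≤ k := le_of_abs_le habs
    have hmem : t + h ∈ Set.Icc a b := ⟨by linarith [ht.1], by linarith [ht.2]⟩
    rw [hf]
    simp only [Set.indicator_of_mem hmem, hw t]
    rw [if_pos ⟨by linarith [ht.1], by linarith [ht.2]⟩]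
    norm_num
  rcases abs_cases h with ⟨hkh, hpos⟩ | ⟨hkh, hneg⟩
  · -- h ≥ 0, k = h, so h > 0
    have hkk : k = h := hk.trans hkh
    have hpos' : 0 < h := by linarith
    have left : ∀ᵐ t : ℝ, t ∈ Set.Ioc a (a + k) → f t = 2 := by
      filter_upwards [hne (a + k)] with t htne ht
      have htlt : t < a + k := lt_of_le_of_ne ht.2 htne
      have hmem : t + h ∈ Set.Icc a b :=
        ⟨by linarith [ht.1], by linarith⟩
      rw [hf]
      simp only [Set.indicator_of_mem hmem, hw t]
      rw [if_neg]
      · norm_num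
      · rintro ⟨h1', -⟩
        linarith
    have right : ∀ᵐ t : ℝ, t ∈ Set.Ioc (b - k) b → f t = 0 := by
      filter_upwards with t ht
      have hmem : t + h ∉ Set.Icc a b := by
        rintro ⟨-, h2'⟩
        have := ht.1
        linarith
      rw [hf]
      simp [Set.indicator_of_notMem hmem]
    obtain ⟨i1, e1⟩ := aux_ae_const_integral f 2 a (a + k) h1 left
    obtain ⟨i2, e2⟩ := aux_ae_const_integral f 1 (a + k) (b - k) h2k mid
    obtain ⟨i3, e3⟩ := aux_ae_const_integral f 0 (b - k) b h3 right
    have s1 := intervalIntegral.integral_add_adjacent_intervals i1 i2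
    have s2 := intervalIntegral.integral_add_adjacent_intervals (i1.trans i2) i3
    rw [← s2, ← s1, e1, e2, e3]
    ring
  · -- h ≤ 0, k = -h
    have hkk : k = -h := hk.trans hkh
    have hneg' : h < 0 := hneg
    have left : ∀ᵐ t : ℝ, t ∈ Set.Ioc a (a + k) → f t = 0 := by
      filter_upwards [hne (a + k)] with t htne ht
      have htlt : t < a + k := lt_of_le_of_ne ht.2 htne
      have hmem : t + h ∉ Set.Icc a b := by
        rintro ⟨h1', -⟩
        linarith
      rw [hf]
      simp [Set.indicator_of_notMem hmem]
    have right : ∀ᵐ t : ℝ, t ∈ Set.Ioc (b - k) b → f t = 2 := by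
      filter_upwards with t ht
      have hmem : t + h ∈ Set.Icc a b := by
        constructor
        · have := ht.1
          linarith
        · linarith [ht.2]
      rw [hf]
      simp only [Set.indicator_of_mem hmem, hw t]
      rw [if_neg]
      · norm_num
      · rintro ⟨-, h2'⟩
        have := ht.1
        linarith
    obtain ⟨i1, e1⟩ := aux_ae_const_integral f 0 a (a + k) h1 left
    obtain ⟨i2, e2⟩ := aux_ae_const_integral f 1 (a + k) (b - k) h2k mid
    obtain ⟨i3, e3⟩ := aux_ae_const_integral f 2 (b - k) b h3 right
    have s1 := intervalIntegral.integral_add_adjacent_intervals i1 i2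
    have s2 := intervalIntegral.integral_add_adjacent_intervals (i1.trans i2) i3
    rw [← s2, ← s1, e1, e2, e3]
    ring
end

section
/- Let σ > 0 and α > 0, and define φ : ℝ² × ℝ → ℝ by φ(s, t) = (2πσ²)⁻¹ exp(−‖s‖²/(2σ²)) · α e^{−αt} 1_{{t ≥ 0}}. Then for every (u, v) ∈ ℝ² × ℝ, ∫_{ℝ²×ℝ} φ(y) · φ(y + (u, v)) dy = (α/(8πσ²)) exp(−‖u‖²/(4σ²) − α|v|). Consequently, the pair correlation function g(u, v) = 1 + (1/ν)(φ ∗ φ̃)(u, v) of the shot-noise Cox process with parent intensity ν > 0 and offspring dispersal density φ equals 1 + (α/(8πσ²ν)) exp(−‖u‖²/(4σ²) − α|v|). -/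
open MeasureTheory Real Set

private lemma snc_exp_tail (a c : ℝ) (hc : 0 < c) :
    ∫ x in Ioi a, Real.exp (-c * x) = Real.exp (-c * a) / c := by
  have hderiv : ∀ x : ℝ, HasDerivAt (fun x => -(Real.exp (-c * x) / c))
      (Real.exp (-c * x)) x := by
    intro x
    have h1 : HasDerivAt (fun x : ℝ => -c * x) (-c) x := by
      simpa using (hasDerivAt_id x).const_mul (-c)
    have h2 := (h1.exp.div_const c).neg
    convert h2 using 1
    · rfl
    · rfl
    · rfl
    · field_simp
  have hint : IntegrableOn (fun x => Real.exp (-c * x)) (Ioi a) :=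
    exp_neg_integrableOn_Ioi a hc
  have htend : Filter.Tendsto (fun x => -(Real.exp (-c * x) / c)) Filter.atTop (nhds 0) := by
    have h1 : Filter.Tendsto (fun x : ℝ => -c * x) Filter.atTop Filter.atBot := by
      exact Filter.Tendsto.const_mul_atTop_of_neg (by linarith) Filter.tendsto_id
    have := (Real.tendsto_exp_atBot.comp h1).div_const c |>.neg
    simpa using this
  have := integral_Ioi_of_hasDerivAt_of_tendsto' (fun x _ => hderiv x) hint htend
  rw [this]
  ring

private lemma snc_expo_conv (α v : ℝ) (hα : 0 < α) :
    ∫ t : ℝ, (if 0 ≤ t then α * Real.exp (-α * t) else 0) *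
        (if 0 ≤ t + v then α * Real.exp (-α * (t + v)) else 0)
      = α / 2 * Real.exp (-α * |v|) := by
  set a := max 0 (-v) with ha
  have hpt : ∀ t : ℝ, (if 0 ≤ t then α * Real.exp (-α * t) else 0) *
      (if 0 ≤ t + v then α * Real.exp (-α * (t + v)) else 0)
      = Set.indicator (Ici a) (fun t => α ^ 2 * Real.exp (-α * v) * Real.exp (-(2 * α) * t)) t := by
    intro t
    rw [Set.indicator_apply]
    by_cases h1 : 0 ≤ t <;> by_cases h2 : 0 ≤ t + v <;>
      simp only [h1, h2, if_true, if_false, mem_Ici]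
    · rw [if_pos (by simp [ha]; constructor <;> linarith)]
      rw [show α * rexp (-α * t) * (α * rexp (-α * (t + v)))
        = α ^ 2 * rexp (-α * t + -α * (t + v)) by rw [Real.exp_add]; ring]
      rw [show -α * t + -α * (t + v) = -α * v + -(2 * α) * t by ring, Real.exp_add]
      ring
    · rw [if_neg (by simp [ha]; intro _; linarith)]; ring
    · rw [if_neg (by simp [ha]; intro h; linarith)]; ring
    · rw [if_neg (by simp [ha]; intro h; linarith)]; ring
  simp_rw [hpt]
  rw [integral_indicator measurableSet_Ici, integral_Ici_eq_integral_Ioi,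
    MeasureTheory.integral_const_mul, snc_exp_tail a (2 * α) (by linarith)]
  have hva : v + 2 * a = |v| := by
    rcases le_or_gt 0 v with h | h
    · rw [ha, max_eq_left (by linarith), abs_of_nonneg h]; ring
    · rw [ha, max_eq_right (by linarith), abs_of_neg h]; ring
  have h2 : rexp (-α * v) * rexp (-(2 * α) * a) = rexp (-α * |v|) := by
    rw [← Real.exp_add, ← hva]; ring_nf
  rw [show α ^ 2 * rexp (-α * v) * (rexp (-(2 * α) * a) / (2 * α))
      = (rexp (-α * v) * rexp (-(2 * α) * a)) * (α ^ 2 / (2 * α)) by ring, h2]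
  rw [show α ^ 2 / (2 * α) = α / 2 by field_simp]
  ring

private lemma snc_gauss_conv (σ : ℝ) (hσ : 0 < σ) (u : EuclideanSpace ℝ (Fin 2)) :
    ∫ s : EuclideanSpace ℝ (Fin 2),
        ((2 * π * σ ^ 2)⁻¹ * Real.exp (-‖s‖ ^ 2 / (2 * σ ^ 2))) *
        ((2 * π * σ ^ 2)⁻¹ * Real.exp (-‖s + u‖ ^ 2 / (2 * σ ^ 2)))
      = (4 * π * σ ^ 2)⁻¹ * Real.exp (-‖u‖ ^ 2 / (4 * σ ^ 2)) := by
  have hσ2 : (0:ℝ) < σ ^ 2 := by positivity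
  have hpi : (0:ℝ) < π := Real.pi_pos
  set w : EuclideanSpace ℝ (Fin 2) := (2⁻¹ : ℝ) • u with hw
  have key : ∀ s : EuclideanSpace ℝ (Fin 2),
      ‖s‖ ^ 2 + ‖s + u‖ ^ 2 = ‖u‖ ^ 2 / 2 + 2 * ‖s + w‖ ^ 2 := by
    intro s
    have h1 : ‖s + u‖ ^ 2 = ‖s‖ ^ 2 + 2 * inner ℝ s u + ‖u‖ ^ 2 := norm_add_sq_real s u
    have h2 : ‖s + w‖ ^ 2 = ‖s‖ ^ 2 + 2 * inner ℝ s w + ‖w‖ ^ 2 := norm_add_sq_real s w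
    have h3 : (inner ℝ s w : ℝ) = 2⁻¹ * inner ℝ s u := real_inner_smul_right s u 2⁻¹
    have h4 : ‖w‖ ^ 2 = 2⁻¹ ^ 2 * ‖u‖ ^ 2 := by
      rw [hw, norm_smul]
      simp [mul_pow]
    rw [h1, h2, h3, h4]; ring
  have hpt : ∀ s : EuclideanSpace ℝ (Fin 2),
      ((2 * π * σ ^ 2)⁻¹ * Real.exp (-‖s‖ ^ 2 / (2 * σ ^ 2))) *
        ((2 * π * σ ^ 2)⁻¹ * Real.exp (-‖s + u‖ ^ 2 / (2 * σ ^ 2)))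
      = ((2 * π * σ ^ 2)⁻¹ ^ 2 * Real.exp (-‖u‖ ^ 2 / (4 * σ ^ 2))) *
        Real.exp (-(σ ^ 2)⁻¹ * ‖s + w‖ ^ 2) := by
    intro s
    rw [show ((2 * π * σ ^ 2)⁻¹ * Real.exp (-‖s‖ ^ 2 / (2 * σ ^ 2))) *
        ((2 * π * σ ^ 2)⁻¹ * Real.exp (-‖s + u‖ ^ 2 / (2 * σ ^ 2)))
      = (2 * π * σ ^ 2)⁻¹ ^ 2 * Real.exp (-‖s‖ ^ 2 / (2 * σ ^ 2) + -‖s + u‖ ^ 2 / (2 * σ ^ 2))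
        by rw [Real.exp_add]; ring]
    rw [show -‖s‖ ^ 2 / (2 * σ ^ 2) + -‖s + u‖ ^ 2 / (2 * σ ^ 2)
      = -‖u‖ ^ 2 / (4 * σ ^ 2) + -(σ ^ 2)⁻¹ * ‖s + w‖ ^ 2 by
        rw [← add_div, ← neg_add, key s]; field_simp; ring]
    rw [Real.exp_add]; ring
  simp_rw [hpt]
  rw [MeasureTheory.integral_const_mul]
  rw [MeasureTheory.integral_add_right_eq_self (fun s : EuclideanSpace ℝ (Fin 2) =>
    Real.exp (-(σ ^ 2)⁻¹ * ‖s‖ ^ 2)) w]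
  rw [GaussianFourier.integral_rexp_neg_mul_sq_norm (by positivity : (0:ℝ) < (σ ^ 2)⁻¹)]
  have hrank : (Module.finrank ℝ (EuclideanSpace ℝ (Fin 2)) : ℝ) = 2 := by
    simp [finrank_euclideanSpace_fin]
  rw [hrank]
  rw [show π / (σ ^ 2)⁻¹ = π * σ ^ 2 by field_simp]
  rw [show ((2:ℝ) / 2) = 1 by norm_num, Real.rpow_one]
  field_simp
  ring

private lemma snc_main (σ α : ℝ) (hσ : 0 < σ) (hα : 0 < α)
    (φ : EuclideanSpace ℝ (Fin 2) × ℝ → ℝ)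
    (hφ : ∀ s t, φ (s, t) = (2 * π * σ ^ 2)⁻¹ * Real.exp (-‖s‖ ^ 2 / (2 * σ ^ 2)) *
        (if 0 ≤ t then α * Real.exp (-α * t) else 0))
    (u : EuclideanSpace ℝ (Fin 2)) (v : ℝ) :
    ∫ y, φ y * φ (y + (u, v)) ∂volume
        = α / (8 * π * σ ^ 2) * Real.exp (-‖u‖ ^ 2 / (4 * σ ^ 2) - α * |v|) := by
  have hpi : (0:ℝ) < π := Real.pi_pos
  have hσ2 : (0:ℝ) < σ ^ 2 := by positivity
  have hpt : ∀ y : EuclideanSpace ℝ (Fin 2) × ℝ, φ y * φ (y + (u, v))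
      = (((2 * π * σ ^ 2)⁻¹ * Real.exp (-‖y.1‖ ^ 2 / (2 * σ ^ 2))) *
          ((2 * π * σ ^ 2)⁻¹ * Real.exp (-‖y.1 + u‖ ^ 2 / (2 * σ ^ 2)))) *
        ((if 0 ≤ y.2 then α * Real.exp (-α * y.2) else 0) *
          (if 0 ≤ y.2 + v then α * Real.exp (-α * (y.2 + v)) else 0)) := by
    intro y
    have h1 : y = (y.1, y.2) := rfl
    have h2 : y + (u, v) = (y.1 + u, y.2 + v) := rfl
    rw [h2, show φ y = φ (y.1, y.2) from rfl, hφ, hφ]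
    ring
  simp_rw [hpt]
  rw [MeasureTheory.Measure.volume_eq_prod]
  rw [MeasureTheory.integral_prod_mul
    (f := fun s : EuclideanSpace ℝ (Fin 2) =>
      ((2 * π * σ ^ 2)⁻¹ * Real.exp (-‖s‖ ^ 2 / (2 * σ ^ 2))) *
        ((2 * π * σ ^ 2)⁻¹ * Real.exp (-‖s + u‖ ^ 2 / (2 * σ ^ 2))))
    (g := fun t : ℝ =>
      (if 0 ≤ t then α * Real.exp (-α * t) else 0) *
        (if 0 ≤ t + v then α * Real.exp (-α * (t + v)) else 0))]
  rw [snc_gauss_conv σ hσ u, snc_expo_conv α v hα]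
  rw [show -‖u‖ ^ 2 / (4 * σ ^ 2) - α * |v| = -‖u‖ ^ 2 / (4 * σ ^ 2) + -α * |v| by ring,
    Real.exp_add]
  field_simp
  ring

/-- For the spatio-temporal offspring dispersal density
`φ(s,t) = (2πσ²)⁻¹ exp(−‖s‖²/(2σ²)) · α e^{−αt} 1_{t ≥ 0}`, one has
`∫ φ(y) φ(y + (u,v)) dy = (α/(8πσ²)) exp(−‖u‖²/(4σ²) − α|v|)`; consequently the
pair correlation function `g(u,v) = 1 + (1/ν)(φ ∗ φ̃)(u,v)` of the shot-noise Cox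
process with parent intensity `ν > 0` equals
`1 + (α/(8πσ²ν)) exp(−‖u‖²/(4σ²) − α|v|)`. -/
theorem shot_noise_cox_pcf
    (σ α ν : ℝ) (hσ : 0 < σ) (hα : 0 < α) (hν : 0 < ν)
    (φ : EuclideanSpace ℝ (Fin 2) × ℝ → ℝ)
    (hφ : ∀ s t, φ (s, t) = (2 * π * σ ^ 2)⁻¹ * Real.exp (-‖s‖ ^ 2 / (2 * σ ^ 2)) *
        (if 0 ≤ t then α * Real.exp (-α * t) else 0))
    (u : EuclideanSpace ℝ (Fin 2)) (v : ℝ) :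
    (∫ y, φ y * φ (y + (u, v)) ∂volume
        = α / (8 * π * σ ^ 2) * Real.exp (-‖u‖ ^ 2 / (4 * σ ^ 2) - α * |v|)) ∧
    1 + (1 / ν) * ∫ y, φ y * φ (y - (u, v)) ∂volume
        = 1 + α / (8 * π * σ ^ 2 * ν) * Real.exp (-‖u‖ ^ 2 / (4 * σ ^ 2) - α * |v|) := by
  constructor
  · exact snc_main σ α hσ hα φ hφ u v
  · have h1 : ∀ y : EuclideanSpace ℝ (Fin 2) × ℝ, y - (u, v) = y + (-u, -v) := by
      intro y
      rw [sub_eq_add_neg]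
      rfl
    simp_rw [h1]
    rw [snc_main σ α hσ hα φ hφ (-u) (-v)]
    rw [norm_neg, abs_neg]
    field_simp
end
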